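/- If T₁ and T₂ are representations of X with variation of information VI(T₁, T₂) := H(T₁|T₂) + H(T₂|T₁) = 0, then T₁ ≅ T₂, i.e., there is a bijection σ: supp(T₁) → supp(T₂) with q_{T₁|X}(t₁|x) = q_{T₂|X}(σ(t₁)|x) for all t₁ ∈ supp(T₁), x ∈ supp(X). -/
import Mathlib
open Finset

/-- Shannon entropy of a finitely supported distribution. -/
noncomputable def ent {α : Type*} [Fintype α] (p : α → ℝ) : ℝ := ∑ a, Real.negMulLog (p a)

lemma negMulLog_sum_aux {ι : Type*} [Fintype ι] (a : ι → ℝ) (ha : ∀ i, 0 ≤ a i) :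
    0 ≤ ∑ i, Real.negMulLog (a i) - Real.negMulLog (∑ i, a i) ∧
    (∑ i, Real.negMulLog (a i) - Real.negMulLog (∑ i, a i) = 0 →
      ∀ i, a i = 0 ∨ a i = ∑ j, a j) := by
  set S := ∑ i, a i with hS
  have hSle : ∀ i, a i ≤ S := fun i => Finset.single_le_sum (fun j _ => ha j) (Finset.mem_univ i)
  have hterm : ∀ i, 0 ≤ a i * (Real.log S - Real.log (a i)) := by
    intro i
    rcases (ha i).eq_or_lt with h | h
    · simp [← h]
    · have hlog : Real.log (a i) ≤ Real.log S := Real.log_le_log h (hSle i)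
      exact mul_nonneg h.le (by linarith)
  have hkey : ∑ i, Real.negMulLog (a i) - Real.negMulLog S = ∑ i, a i * (Real.log S - Real.log (a i)) := by
    have h1 : ∑ i, a i * Real.log S = S * Real.log S := by rw [← Finset.sum_mul]
    simp only [Real.negMulLog, mul_sub, Finset.sum_sub_distrib, h1]
    simp only [neg_mul, Finset.sum_neg_distrib]; ring
  constructor
  · rw [hkey]; exact Finset.sum_nonneg fun i _ => hterm i
  · intro h0 i
    rw [hkey] at h0
    have hz := (Finset.sum_eq_zero_iff_of_nonneg (fun i _ => hterm i)).1 h0 i (Finset.mem_univ i)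
    rcases mul_eq_zero.1 hz with h | h
    · exact Or.inl h
    · rcases (ha i).eq_or_lt with h' | h'
      · exact Or.inl h'.symm
      · right
        have hSpos : 0 < S := lt_of_lt_of_le h' (hSle i)
        have hl : Real.log (a i) = Real.log S := by linarith
        exact Real.log_injOn_pos (Set.mem_Ioi.2 h') (Set.mem_Ioi.2 hSpos) hl

lemma ent_split₂ {Θ₁ Θ₂ : Type*} [Fintype Θ₁] [Fintype Θ₂] (p : Θ₁ → Θ₂ → ℝ) :
    ent (fun tt : Θ₁ × Θ₂ => p tt.1 tt.2) - ent (fun t₂ => ∑ t₁, p t₁ t₂)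
      = ∑ t₂, (∑ t₁, Real.negMulLog (p t₁ t₂) - Real.negMulLog (∑ t₁, p t₁ t₂)) := by
  unfold ent
  rw [Fintype.sum_prod_type, Finset.sum_comm, ← Finset.sum_sub_distrib]

lemma ent_split₁ {Θ₁ Θ₂ : Type*} [Fintype Θ₁] [Fintype Θ₂] (p : Θ₁ → Θ₂ → ℝ) :
    ent (fun tt : Θ₁ × Θ₂ => p tt.1 tt.2) - ent (fun t₁ => ∑ t₂, p t₁ t₂)
      = ∑ t₁, (∑ t₂, Real.negMulLog (p t₁ t₂) - Real.negMulLog (∑ t₂, p t₁ t₂)) := by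
  unfold ent
  rw [Fintype.sum_prod_type, ← Finset.sum_sub_distrib]

theorem vi_zero_implies_equivalent
    {X Θ₁ Θ₂ : Type*} [Fintype X] [Fintype Θ₁] [Fintype Θ₂]
    (pX : X → ℝ) (hpX0 : ∀ x, 0 ≤ pX x) (hpX1 : ∑ x, pX x = 1)
    (q₁ : Θ₁ → X → ℝ) (q₂ : Θ₂ → X → ℝ)
    (hq₁0 : ∀ t x, 0 ≤ q₁ t x) (hq₁1 : ∀ x, ∑ t, q₁ t x = 1)
    (hq₂0 : ∀ t x, 0 ≤ q₂ t x) (hq₂1 : ∀ x, ∑ t, q₂ t x = 1)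
    (hVI :
      (ent (fun tt : Θ₁ × Θ₂ => ∑ x, pX x * q₁ tt.1 x * q₂ tt.2 x)
        - ent (fun t₂ : Θ₂ => ∑ x, pX x * q₂ t₂ x))
      + (ent (fun tt : Θ₁ × Θ₂ => ∑ x, pX x * q₁ tt.1 x * q₂ tt.2 x)
        - ent (fun t₁ : Θ₁ => ∑ x, pX x * q₁ t₁ x)) = 0) :
    ∃ σ : Θ₁ → Θ₂,
      Set.BijOn σ {t₁ | 0 < ∑ x, pX x * q₁ t₁ x} {t₂ | 0 < ∑ x, pX x * q₂ t₂ x} ∧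
      ∀ t₁ ∈ {t₁ | 0 < ∑ x, pX x * q₁ t₁ x}, ∀ x, 0 < pX x → q₁ t₁ x = q₂ (σ t₁) x := by
  classical
  -- the joint distribution
  set p : Θ₁ → Θ₂ → ℝ := fun t₁ t₂ => ∑ x, pX x * q₁ t₁ x * q₂ t₂ x with hpdef
  have hp0 : ∀ t₁ t₂, 0 ≤ p t₁ t₂ := fun t₁ t₂ =>
    Finset.sum_nonneg fun x _ => mul_nonneg (mul_nonneg (hpX0 x) (hq₁0 t₁ x)) (hq₂0 t₂ x)
  have hm₁ : ∀ t₁, ∑ t₂, p t₁ t₂ = ∑ x, pX x * q₁ t₁ x := by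
    intro t₁
    rw [Finset.sum_comm]
    refine Finset.sum_congr rfl fun x _ => ?_
    rw [show (fun t₂ => pX x * q₁ t₁ x * q₂ t₂ x) = fun t₂ => (pX x * q₁ t₁ x) * q₂ t₂ x from rfl,
      ← Finset.mul_sum, hq₂1 x, mul_one]
  have hm₂ : ∀ t₂, ∑ t₁, p t₁ t₂ = ∑ x, pX x * q₂ t₂ x := by
    intro t₂
    rw [Finset.sum_comm]
    refine Finset.sum_congr rfl fun x _ => ?_
    have : ∀ t₁, pX x * q₁ t₁ x * q₂ t₂ x = (pX x * q₂ t₂ x) * q₁ t₁ x := fun t₁ => by ring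
    simp only [this, ← Finset.mul_sum, hq₁1 x, mul_one]
  -- nonempty Θ₂
  have hXne : Nonempty X := by
    rcases isEmpty_or_nonempty X with h | h
    · simp at hpX1
    · exact h
  obtain ⟨x₀⟩ := hXne
  have hΘ₂ne : Nonempty Θ₂ := by
    rcases isEmpty_or_nonempty Θ₂ with h | h
    · have := hq₂1 x₀; simp at this
    · exact h
  inhabit Θ₂
  -- rewrite hVI with the joint
  have e₂ : (fun t₂ : Θ₂ => ∑ x, pX x * q₂ t₂ x) = fun t₂ => ∑ t₁, p t₁ t₂ :=
    funext fun t₂ => (hm₂ t₂).symm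
  have e₁ : (fun t₁ : Θ₁ => ∑ x, pX x * q₁ t₁ x) = fun t₁ => ∑ t₂, p t₁ t₂ :=
    funext fun t₁ => (hm₁ t₁).symm
  rw [e₁, e₂] at hVI
  have hD₂ := ent_split₂ p
  have hD₁ := ent_split₁ p
  have hT₂ : ∀ t₂, 0 ≤ ∑ t₁, Real.negMulLog (p t₁ t₂) - Real.negMulLog (∑ t₁, p t₁ t₂) :=
    fun t₂ => (negMulLog_sum_aux (fun t₁ => p t₁ t₂) (fun t₁ => hp0 t₁ t₂)).1
  have hT₁ : ∀ t₁, 0 ≤ ∑ t₂, Real.negMulLog (p t₁ t₂) - Real.negMulLog (∑ t₂, p t₁ t₂) :=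
    fun t₁ => (negMulLog_sum_aux (fun t₂ => p t₁ t₂) (fun t₂ => hp0 t₁ t₂)).1
  have hS₂ : 0 ≤ ∑ t₂, (∑ t₁, Real.negMulLog (p t₁ t₂) - Real.negMulLog (∑ t₁, p t₁ t₂)) :=
    Finset.sum_nonneg fun t₂ _ => hT₂ t₂
  have hS₁ : 0 ≤ ∑ t₁, (∑ t₂, Real.negMulLog (p t₁ t₂) - Real.negMulLog (∑ t₂, p t₁ t₂)) :=
    Finset.sum_nonneg fun t₁ _ => hT₁ t₁
  have hZ₂ : ∑ t₂, (∑ t₁, Real.negMulLog (p t₁ t₂) - Real.negMulLog (∑ t₁, p t₁ t₂)) = 0 := by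
    rw [hD₂, hD₁] at hVI; linarith
  have hZ₁ : ∑ t₁, (∑ t₂, Real.negMulLog (p t₁ t₂) - Real.negMulLog (∑ t₂, p t₁ t₂)) = 0 := by
    rw [hD₂, hD₁] at hVI; linarith
  -- the equality cases
  have hcol : ∀ t₂ t₁, p t₁ t₂ = 0 ∨ p t₁ t₂ = ∑ t₁', p t₁' t₂ := by
    intro t₂
    have h0 := (Finset.sum_eq_zero_iff_of_nonneg (fun t₂ _ => hT₂ t₂)).1 hZ₂ t₂ (Finset.mem_univ t₂)
    exact (negMulLog_sum_aux (fun t₁ => p t₁ t₂) (fun t₁ => hp0 t₁ t₂)).2 h0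
  have hrow : ∀ t₁ t₂, p t₁ t₂ = 0 ∨ p t₁ t₂ = ∑ t₂', p t₁ t₂' := by
    intro t₁
    have h0 := (Finset.sum_eq_zero_iff_of_nonneg (fun t₁ _ => hT₁ t₁)).1 hZ₁ t₁ (Finset.mem_univ t₁)
    exact (negMulLog_sum_aux (fun t₂ => p t₁ t₂) (fun t₂ => hp0 t₁ t₂)).2 h0
  -- uniqueness
  have hrowu : ∀ t₁ a b, 0 < p t₁ a → 0 < p t₁ b → a = b := by
    intro t₁ a b ha hb
    by_contra hne
    have h1 := (hrow t₁ a).resolve_left ha.ne'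
    have h2 := (hrow t₁ b).resolve_left hb.ne'
    have hle : p t₁ a + p t₁ b ≤ ∑ t₂', p t₁ t₂' := by
      rw [← Finset.sum_pair hne]
      exact Finset.sum_le_sum_of_subset_of_nonneg (Finset.subset_univ _)
        (fun i _ _ => hp0 t₁ i)
    linarith
  have hcolu : ∀ t₂ a b, 0 < p a t₂ → 0 < p b t₂ → a = b := by
    intro t₂ a b ha hb
    by_contra hne
    have h1 := (hcol t₂ a).resolve_left ha.ne'
    have h2 := (hcol t₂ b).resolve_left hb.ne'
    have hle : p a t₂ + p b t₂ ≤ ∑ t₁', p t₁' t₂ := by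
      rw [← Finset.sum_pair (f := fun t₁' => p t₁' t₂) hne]
      exact Finset.sum_le_sum_of_subset_of_nonneg (Finset.subset_univ _)
        (fun i _ _ => hp0 i t₂)
    linarith
  -- existence of a positive column for each supported t₁
  have hex : ∀ t₁, 0 < ∑ x, pX x * q₁ t₁ x → ∃ t₂, 0 < p t₁ t₂ := by
    intro t₁ ht
    by_contra h
    push_neg at h
    have : ∑ t₂, p t₁ t₂ ≤ 0 := Finset.sum_nonpos fun t₂ _ => h t₂
    rw [hm₁ t₁] at this; linarith
  have hex' : ∀ t₂, 0 < ∑ x, pX x * q₂ t₂ x → ∃ t₁, 0 < p t₁ t₂ := by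
    intro t₂ ht
    by_contra h
    push_neg at h
    have : ∑ t₁, p t₁ t₂ ≤ 0 := Finset.sum_nonpos fun t₁ _ => h t₁
    rw [hm₂ t₂] at this; linarith
  -- define σ
  refine ⟨fun t₁ => if h : ∃ t₂, 0 < p t₁ t₂ then h.choose else default, ?_, ?_⟩
  · set σ : Θ₁ → Θ₂ := fun t₁ => if h : ∃ t₂, 0 < p t₁ t₂ then h.choose else default with hσdef
    have hσ : ∀ t₁, 0 < ∑ x, pX x * q₁ t₁ x → 0 < p t₁ (σ t₁) := by
      intro t₁ ht
      have h := hex t₁ ht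
      simp only [hσdef, dif_pos h]
      exact h.choose_spec
    refine ⟨?_, ?_, ?_⟩
    · intro t₁ ht₁
      have hpt := hσ t₁ ht₁
      have : p t₁ (σ t₁) ≤ ∑ t₁', p t₁' (σ t₁) :=
        Finset.single_le_sum (fun j _ => hp0 j (σ t₁)) (Finset.mem_univ t₁)
      have := lt_of_lt_of_le hpt this
      rw [hm₂] at this
      exact this
    · intro a ha b hb hab
      have hpa := hσ a ha
      have hpb := hσ b hb
      rw [hab] at hpa
      exact hcolu (σ b) a b hpa hpb
    · intro t₂ ht₂
      obtain ⟨t₁, ht₁⟩ := hex' t₂ ht₂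
      have hmem : 0 < ∑ x, pX x * q₁ t₁ x := by
        have : p t₁ t₂ ≤ ∑ t₂', p t₁ t₂' :=
          Finset.single_le_sum (fun j _ => hp0 t₁ j) (Finset.mem_univ t₂)
        have := lt_of_lt_of_le ht₁ this
        rwa [hm₁] at this
      refine ⟨t₁, hmem, ?_⟩
      exact hrowu t₁ (σ t₁) t₂ (hσ t₁ hmem) ht₁
  · set σ : Θ₁ → Θ₂ := fun t₁ => if h : ∃ t₂, 0 < p t₁ t₂ then h.choose else default with hσdef
    have hσ : ∀ t₁, 0 < ∑ x, pX x * q₁ t₁ x → 0 < p t₁ (σ t₁) := by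
      intro t₁ ht
      have h := hex t₁ ht
      simp only [hσdef, dif_pos h]
      exact h.choose_spec
    intro t₁ ht₁ x hx
    have ht₁' : 0 < ∑ x, pX x * q₁ t₁ x := ht₁
    have hpt := hσ t₁ ht₁'
    -- vanishing products off the graph
    have hzero : ∀ a b, p a b = 0 → q₁ a x * q₂ b x = 0 := by
      intro a b hab
      have := (Finset.sum_eq_zero_iff_of_nonneg
        (fun y _ => mul_nonneg (mul_nonneg (hpX0 y) (hq₁0 a y)) (hq₂0 b y))).1 hab x
        (Finset.mem_univ x)
      rcases mul_eq_zero.1 this with h | h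
      · rcases mul_eq_zero.1 h with h' | h'
        · exact absurd h' (ne_of_gt hx)
        · rw [h', zero_mul]
      · rw [h, mul_zero]
    have hA : ∀ t₂', t₂' ≠ σ t₁ → q₁ t₁ x * q₂ t₂' x = 0 := by
      intro t₂' hne
      refine hzero t₁ t₂' ?_
      rcases (hp0 t₁ t₂').eq_or_lt with h | h
      · exact h.symm
      · exact absurd (hrowu t₁ t₂' (σ t₁) h hpt) hne
    have hB : ∀ t₁', t₁' ≠ t₁ → q₁ t₁' x * q₂ (σ t₁) x = 0 := by
      intro t₁' hne
      refine hzero t₁' (σ t₁) ?_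
      rcases (hp0 t₁' (σ t₁)).eq_or_lt with h | h
      · exact h.symm
      · exact absurd (hcolu (σ t₁) t₁' t₁ h hpt) hne
    rcases (hq₁0 t₁ x).eq_or_lt with h1 | h1
    · -- q₁ t₁ x = 0 : show q₂ (σ t₁) x = 0
      rw [← h1]
      by_contra h2
      have h2' : q₂ (σ t₁) x ≠ 0 := fun h => h2 (h ▸ rfl)
      have hq1z : ∀ t₁' , t₁' ≠ t₁ → q₁ t₁' x = 0 := by
        intro t₁' hne
        rcases mul_eq_zero.1 (hB t₁' hne) with h | h
        · exact h
        · exact absurd h h2'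
      have : ∑ t, q₁ t x = q₁ t₁ x := Finset.sum_eq_single t₁ (fun b _ hb => hq1z b hb)
        (fun h => absurd (Finset.mem_univ t₁) h)
      rw [hq₁1 x, ← h1] at this
      exact one_ne_zero this
    · -- q₁ t₁ x > 0
      have hq2z : ∀ t₂', t₂' ≠ σ t₁ → q₂ t₂' x = 0 := by
        intro t₂' hne
        rcases mul_eq_zero.1 (hA t₂' hne) with h | h
        · exact absurd h h1.ne'
        · exact h
      have h2one : q₂ (σ t₁) x = 1 := by
        have : ∑ t, q₂ t x = q₂ (σ t₁) x := Finset.sum_eq_single (σ t₁)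
          (fun b _ hb => hq2z b hb) (fun h => absurd (Finset.mem_univ _) h)
        rw [hq₂1 x] at this; exact this.symm
      have hq1z : ∀ t₁', t₁' ≠ t₁ → q₁ t₁' x = 0 := by
        intro t₁' hne
        rcases mul_eq_zero.1 (hB t₁' hne) with h | h
        · exact h
        · rw [h2one] at h; exact absurd h one_ne_zero
      have h1one : q₁ t₁ x = 1 := by
        have : ∑ t, q₁ t x = q₁ t₁ x := Finset.sum_eq_single t₁
          (fun b _ hb => hq1z b hb) (fun h => absurd (Finset.mem_univ _) h)
        rw [hq₁1 x] at this; exact this.symm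
      rw [h1one, h2one]
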